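/- Let K be a Hopf subalgebra of a finite-dimensional Hopf algebra H over a field, and suppose the centralizer C_H(K) = {a ∈ H : ak = ka for all k ∈ K} is also a Hopf subalgebra of H. If K is a normal Hopf subalgebra of H, then C_H(K) is a normal Hopf subalgebra of H. -/

import Mathlib

noncomputable section
open scoped TensorProduct

namespace PaperHopf
universe u
variable {F : Type u} [Field F] {H : Type u} [Ring H] [HopfAlgebra F H]

/-- `K` is a Hopf subalgebra of `H`: a subalgebra closed under comultiplication
(its comultiplication lands in `K ⊗ K` inside `H ⊗ H`) and under the antipode. -/
def IsHopfSub (K : Subalgebra F H) : Prop :=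
  (∀ k ∈ K, Coalgebra.comul (R := F) k ∈
      LinearMap.range (TensorProduct.map K.val.toLinearMap K.val.toLinearMap)) ∧
  (∀ k ∈ K, HopfAlgebra.antipode (R := F) k ∈ K)

/-- `∑ a₍₁₎ k τ(a₍₂₎)`, the left adjoint action of `a` on `k` (Sweedler notation). -/
def adL (a k : H) : H :=
  LinearMap.mul' F H
    (TensorProduct.map (LinearMap.mulRight F k) (HopfAlgebra.antipode (R := F))
      (Coalgebra.comul (R := F) a))

/-- `∑ τ(a₍₁₎) k a₍₂₎`, the right adjoint action of `a` on `k` (Sweedler notation). -/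
def adR (a k : H) : H :=
  LinearMap.mul' F H
    (TensorProduct.map (HopfAlgebra.antipode (R := F)) (LinearMap.mulLeft F k)
      (Coalgebra.comul (R := F) a))

/-- `K` is a normal Hopf subalgebra: `a₍₁₎ K τ(a₍₂₎) ⊆ K` and `τ(a₍₁₎) K a₍₂₎ ⊆ K`
for all `a ∈ H`. -/
def IsNormalHopfSub (K : Subalgebra F H) : Prop :=
  ∀ a : H, ∀ k ∈ K, adL (F := F) a k ∈ K ∧ adR (F := F) a k ∈ K

/-- `K` is a normal subring of `H`: for every two-sided ideal `J` of `H`, the contracted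
ideal `J ∩ K` is `H`-invariant, i.e. `H (J ∩ K) = (J ∩ K) H` (as additive subgroups
generated by the respective products). -/
def IsNormalSubring (K : Subalgebra F H) : Prop :=
  ∀ J : TwoSidedIdeal H,
    AddSubgroup.closure {x : H | ∃ h k, k ∈ J ∧ k ∈ K ∧ x = h * k} =
    AddSubgroup.closure {x : H | ∃ h k, k ∈ J ∧ k ∈ K ∧ x = k * h}

end PaperHopf

namespace PaperHopf
universe u

variable (F : Type u) [Field F] {H : Type u} [Ring H] [HopfAlgebra F H]

local notation "τ" => HopfAlgebra.antipode (R := F) (A := H)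
local notation "μ" => LinearMap.mul' F H

def Tf (f g h : H →ₗ[F] H) : H ⊗[F] (H ⊗[F] H) →ₗ[F] H :=
  LinearMap.mul' F H ∘ₗ TensorProduct.map f (LinearMap.mul' F H ∘ₗ TensorProduct.map g h)

@[simp] lemma Tf_apply (f g h : H →ₗ[F] H) (p q r : H) :
    Tf F f g h (p ⊗ₜ (q ⊗ₜ r)) = f p * (g q * h r) := by
  simp [Tf]

def adRl (k : H) : H →ₗ[F] H :=
  LinearMap.mul' F H ∘ₗ
    TensorProduct.map (HopfAlgebra.antipode (R := F)) (LinearMap.mulLeft F k) ∘ₗ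
    Coalgebra.comul (R := F)

def adLl (k : H) : H →ₗ[F] H :=
  LinearMap.mul' F H ∘ₗ
    TensorProduct.map (LinearMap.mulRight F k) (HopfAlgebra.antipode (R := F)) ∘ₗ
    Coalgebra.comul (R := F)

lemma adRl_repr (k x : H) (s : Coalgebra.Repr F x (H × H)) :
    adRl F k x = ∑ j ∈ s.index, τ (s.left j) * (k * s.right j) := by
  rw [adRl, LinearMap.comp_apply, LinearMap.comp_apply, ← s.eq]
  simp [map_sum]

lemma adLl_repr (k x : H) (s : Coalgebra.Repr F x (H × H)) :
    adLl F k x = ∑ j ∈ s.index, (s.left j * k) * τ (s.right j) := by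
  rw [adLl, LinearMap.comp_apply, LinearMap.comp_apply, ← s.eq]
  simp [map_sum]

lemma counit_smul_right (x : H) (s : Coalgebra.Repr F x (H × H)) :
    ∑ i ∈ s.index, Coalgebra.counit (R := F) (s.left i) • s.right i = x := by
  have h := congrArg (TensorProduct.lid F H) (Coalgebra.sum_counit_tmul_eq s)
  simp only [map_sum, TensorProduct.lid_tmul, one_smul] at h
  exact h

lemma counit_smul_left (x : H) (s : Coalgebra.Repr F x (H × H)) :
    ∑ i ∈ s.index, Coalgebra.counit (R := F) (s.right i) • s.left i = x := by
  have h := congrArg (TensorProduct.rid F H) (Coalgebra.sum_tmul_counit_eq s)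
  simp only [map_sum, TensorProduct.rid_tmul, one_smul] at h
  exact h

open scoped Coalgebra

lemma key_L2 (k x : H) (s : Coalgebra.Repr F x (H × H)) :
    ∑ j ∈ s.index, s.left j * adRl F k (s.right j) = k * x := by
  have coas := congrArg (Tf F LinearMap.id τ (LinearMap.mulLeft F k))
    (Coalgebra.sum_tmul_tmul_eq (R := F) s (fun i => ℛ F (s.left i)) (fun i => ℛ F (s.right i)))
  simp only [map_sum, Tf_apply, LinearMap.id_coe, id_eq, LinearMap.mulLeft_apply] at coas
  calc ∑ j ∈ s.index, s.left j * adRl F k (s.right j)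
      = ∑ i ∈ s.index, ∑ j ∈ (ℛ F (s.right i)).index,
          s.left i * (τ ((ℛ F (s.right i)).left j) * (k * (ℛ F (s.right i)).right j)) := by
        refine Finset.sum_congr rfl fun i _ => ?_
        rw [adRl_repr F k (s.right i) (ℛ F (s.right i)), Finset.mul_sum]
    _ = ∑ i ∈ s.index, ∑ j ∈ (ℛ F (s.left i)).index,
          (ℛ F (s.left i)).left j * (τ ((ℛ F (s.left i)).right j) * (k * s.right i)) :=
        coas.symm
    _ = ∑ i ∈ s.index, Coalgebra.counit (R := F) (s.left i) • (k * s.right i) := by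
        refine Finset.sum_congr rfl fun i _ => ?_
        calc ∑ j ∈ (ℛ F (s.left i)).index,
              (ℛ F (s.left i)).left j * (τ ((ℛ F (s.left i)).right j) * (k * s.right i))
            = (∑ j ∈ (ℛ F (s.left i)).index,
                (ℛ F (s.left i)).left j * τ ((ℛ F (s.left i)).right j)) * (k * s.right i) := by
              rw [Finset.sum_mul]
              exact Finset.sum_congr rfl fun j _ => (mul_assoc _ _ _).symm
          _ = _ := by
              rw [HopfAlgebra.sum_mul_antipode_eq_smul, smul_mul_assoc, one_mul]
    _ = k * ∑ i ∈ s.index, Coalgebra.counit (R := F) (s.left i) • s.right i := by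
        rw [Finset.mul_sum]
        exact Finset.sum_congr rfl fun i _ => (mul_smul_comm _ _ _).symm
    _ = k * x := by rw [counit_smul_right]

lemma key_L1 (k x : H) (s : Coalgebra.Repr F x (H × H)) :
    ∑ j ∈ s.index, adRl F k (s.left j) * τ (s.right j) = τ x * k := by
  have coas := congrArg (Tf F τ (LinearMap.mulLeft F k) τ)
    (Coalgebra.sum_tmul_tmul_eq (R := F) s (fun i => ℛ F (s.left i)) (fun i => ℛ F (s.right i)))
  simp only [map_sum, Tf_apply, LinearMap.mulLeft_apply] at coas
  calc ∑ j ∈ s.index, adRl F k (s.left j) * τ (s.right j)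
      = ∑ i ∈ s.index, ∑ j ∈ (ℛ F (s.left i)).index,
          τ ((ℛ F (s.left i)).left j) *
            (k * (ℛ F (s.left i)).right j * τ (s.right i)) := by
        refine Finset.sum_congr rfl fun i _ => ?_
        rw [adRl_repr F k (s.left i) (ℛ F (s.left i)), Finset.sum_mul]
        exact Finset.sum_congr rfl fun j _ => (mul_assoc _ _ _)
    _ = ∑ i ∈ s.index, ∑ j ∈ (ℛ F (s.right i)).index,
          τ (s.left i) * (k * (ℛ F (s.right i)).left j * τ ((ℛ F (s.right i)).right j)) :=
        coas
    _ = ∑ i ∈ s.index, Coalgebra.counit (R := F) (s.right i) • (τ (s.left i) * k) := by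
        refine Finset.sum_congr rfl fun i _ => ?_
        calc ∑ j ∈ (ℛ F (s.right i)).index,
              τ (s.left i) * (k * (ℛ F (s.right i)).left j * τ ((ℛ F (s.right i)).right j))
            = τ (s.left i) * (k * ∑ j ∈ (ℛ F (s.right i)).index,
                (ℛ F (s.right i)).left j * τ ((ℛ F (s.right i)).right j)) := by
              rw [Finset.mul_sum, Finset.mul_sum]
              exact Finset.sum_congr rfl fun j _ => by rw [mul_assoc]
          _ = _ := by
              rw [HopfAlgebra.sum_mul_antipode_eq_smul, mul_smul_comm, mul_one, mul_smul_comm]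
    _ = (∑ i ∈ s.index, Coalgebra.counit (R := F) (s.right i) • τ (s.left i)) * k := by
        rw [Finset.sum_mul]
        exact Finset.sum_congr rfl fun i _ => (smul_mul_assoc _ _ _).symm
    _ = τ (∑ i ∈ s.index, Coalgebra.counit (R := F) (s.right i) • s.left i) * k := by
        congr 1
        rw [map_sum]
        exact Finset.sum_congr rfl fun i _ => (map_smul _ _ _).symm
    _ = τ x * k := by rw [counit_smul_left]

lemma key_L3 (k x : H) (s : Coalgebra.Repr F x (H × H)) :
    ∑ j ∈ s.index, adLl F k (s.left j) * s.right j = x * k := by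
  have coas := congrArg (Tf F (LinearMap.mulRight F k) τ LinearMap.id)
    (Coalgebra.sum_tmul_tmul_eq (R := F) s (fun i => ℛ F (s.left i)) (fun i => ℛ F (s.right i)))
  simp only [map_sum, Tf_apply, LinearMap.mulRight_apply, LinearMap.id_coe, id_eq] at coas
  calc ∑ j ∈ s.index, adLl F k (s.left j) * s.right j
      = ∑ i ∈ s.index, ∑ j ∈ (ℛ F (s.left i)).index,
          (ℛ F (s.left i)).left j * k *
            (τ ((ℛ F (s.left i)).right j) * s.right i) := by
        refine Finset.sum_congr rfl fun i _ => ?_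
        rw [adLl_repr F k (s.left i) (ℛ F (s.left i)), Finset.sum_mul]
        exact Finset.sum_congr rfl fun j _ => (mul_assoc _ _ _)
    _ = ∑ i ∈ s.index, ∑ j ∈ (ℛ F (s.right i)).index,
          s.left i * k * (τ ((ℛ F (s.right i)).left j) * (ℛ F (s.right i)).right j) :=
        coas
    _ = ∑ i ∈ s.index, Coalgebra.counit (R := F) (s.right i) • (s.left i * k) := by
        refine Finset.sum_congr rfl fun i _ => ?_
        rw [← Finset.mul_sum, HopfAlgebra.sum_antipode_mul_eq_smul, mul_smul_comm, mul_one]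
    _ = (∑ i ∈ s.index, Coalgebra.counit (R := F) (s.right i) • s.left i) * k := by
        rw [Finset.sum_mul]
        exact Finset.sum_congr rfl fun i _ => (smul_mul_assoc _ _ _).symm
    _ = x * k := by rw [counit_smul_left]

lemma key_L4 (k x : H) (s : Coalgebra.Repr F x (H × H)) :
    ∑ j ∈ s.index, τ (s.left j) * adLl F k (s.right j) = k * τ x := by
  have coas := congrArg (Tf F τ (LinearMap.mulRight F k) τ)
    (Coalgebra.sum_tmul_tmul_eq (R := F) s (fun i => ℛ F (s.left i)) (fun i => ℛ F (s.right i)))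
  simp only [map_sum, Tf_apply, LinearMap.mulRight_apply] at coas
  calc ∑ j ∈ s.index, τ (s.left j) * adLl F k (s.right j)
      = ∑ i ∈ s.index, ∑ j ∈ (ℛ F (s.right i)).index,
          τ (s.left i) *
            ((ℛ F (s.right i)).left j * k * τ ((ℛ F (s.right i)).right j)) := by
        refine Finset.sum_congr rfl fun i _ => ?_
        rw [adLl_repr F k (s.right i) (ℛ F (s.right i)), Finset.mul_sum]
    _ = ∑ i ∈ s.index, ∑ j ∈ (ℛ F (s.left i)).index,
          τ ((ℛ F (s.left i)).left j) *
            ((ℛ F (s.left i)).right j * k * τ (s.right i)) :=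
        coas.symm
    _ = ∑ i ∈ s.index, Coalgebra.counit (R := F) (s.left i) • (k * τ (s.right i)) := by
        refine Finset.sum_congr rfl fun i _ => ?_
        calc ∑ j ∈ (ℛ F (s.left i)).index,
              τ ((ℛ F (s.left i)).left j) *
                ((ℛ F (s.left i)).right j * k * τ (s.right i))
            = (∑ j ∈ (ℛ F (s.left i)).index,
                τ ((ℛ F (s.left i)).left j) * (ℛ F (s.left i)).right j) *
                (k * τ (s.right i)) := by
              rw [Finset.sum_mul]
              refine Finset.sum_congr rfl fun j _ => ?_
              rw [mul_assoc, mul_assoc]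
          _ = _ := by
              rw [HopfAlgebra.sum_antipode_mul_eq_smul, smul_mul_assoc, one_mul]
    _ = k * τ (∑ i ∈ s.index, Coalgebra.counit (R := F) (s.left i) • s.right i) := by
        rw [map_sum, Finset.mul_sum]
        refine Finset.sum_congr rfl fun i _ => ?_
        rw [map_smul, mul_smul_comm]
    _ = k * τ x := by rw [counit_smul_right]

lemma adL_eq (a k : H) : adL (F := F) a k = adLl F k a := rfl
lemma adR_eq (a k : H) : adR (F := F) a k = adRl F k a := rfl

theorem main' {K : Subalgebra F H}
    (hn : IsNormalHopfSub K) :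
    IsNormalHopfSub (Subalgebra.centralizer F (K : Set H)) := by
  intro a c hc
  have hcc : ∀ q ∈ K, c * q = q * c := fun q hq =>
    ((Subalgebra.mem_centralizer_iff F).1 hc q hq).symm
  constructor
  · rw [Subalgebra.mem_centralizer_iff]
    intro k hk
    have hadL : adL (F := F) a c =
        ∑ i ∈ (ℛ F a).index, ((ℛ F a).left i * c) * τ ((ℛ F a).right i) :=
      adLl_repr F c a (ℛ F a)
    have coas := congrArg
      (Tf F LinearMap.id (adRl F k) (LinearMap.mulLeft F c ∘ₗ HopfAlgebra.antipode (R := F)))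
      (Coalgebra.sum_tmul_tmul_eq (R := F) (ℛ F a)
        (fun i => ℛ F ((ℛ F a).left i)) (fun i => ℛ F ((ℛ F a).right i)))
    simp only [map_sum, Tf_apply, LinearMap.id_coe, id_eq, LinearMap.comp_apply,
      LinearMap.mulLeft_apply] at coas
    refine Eq.symm ?_
    calc adL (F := F) a c * k
        = ∑ i ∈ (ℛ F a).index, ((ℛ F a).left i * c) * (τ ((ℛ F a).right i) * k) := by
          rw [hadL, Finset.sum_mul]
          exact Finset.sum_congr rfl fun i _ => (mul_assoc _ _ _)
      _ = ∑ i ∈ (ℛ F a).index, ∑ j ∈ (ℛ F ((ℛ F a).right i)).index,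
            (ℛ F a).left i * (adRl F k ((ℛ F ((ℛ F a).right i)).left j) *
              (c * τ ((ℛ F ((ℛ F a).right i)).right j))) := by
          refine Finset.sum_congr rfl fun i _ => ?_
          rw [← key_L1 F k ((ℛ F a).right i) (ℛ F ((ℛ F a).right i)), Finset.mul_sum]
          refine Finset.sum_congr rfl fun j _ => ?_
          have hq : adRl F k ((ℛ F ((ℛ F a).right i)).left j) ∈ K :=
            (hn _ k hk).2
          rw [mul_assoc, ← mul_assoc c, hcc _ hq, mul_assoc]
      _ = ∑ i ∈ (ℛ F a).index, ∑ j ∈ (ℛ F ((ℛ F a).left i)).index,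
            (ℛ F ((ℛ F a).left i)).left j * (adRl F k ((ℛ F ((ℛ F a).left i)).right j) *
              (c * τ ((ℛ F a).right i))) := coas.symm
      _ = ∑ i ∈ (ℛ F a).index, (k * (ℛ F a).left i) * (c * τ ((ℛ F a).right i)) := by
          refine Finset.sum_congr rfl fun i _ => ?_
          rw [← key_L2 F k ((ℛ F a).left i) (ℛ F ((ℛ F a).left i)), Finset.sum_mul]
          exact Finset.sum_congr rfl fun j _ => (mul_assoc _ _ _).symm
      _ = k * adL (F := F) a c := by
          rw [hadL, Finset.mul_sum]
          refine Finset.sum_congr rfl fun i _ => ?_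
          simp only [mul_assoc]
  · rw [Subalgebra.mem_centralizer_iff]
    intro k hk
    have hadR : adR (F := F) a c =
        ∑ i ∈ (ℛ F a).index, τ ((ℛ F a).left i) * (c * (ℛ F a).right i) :=
      adRl_repr F c a (ℛ F a)
    have coas := congrArg
      (Tf F (HopfAlgebra.antipode (R := F)) (adLl F k) (LinearMap.mulLeft F c))
      (Coalgebra.sum_tmul_tmul_eq (R := F) (ℛ F a)
        (fun i => ℛ F ((ℛ F a).left i)) (fun i => ℛ F ((ℛ F a).right i)))
    simp only [map_sum, Tf_apply, LinearMap.mulLeft_apply] at coas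
    refine Eq.symm ?_
    calc adR (F := F) a c * k
        = ∑ i ∈ (ℛ F a).index, τ ((ℛ F a).left i) * (c * ((ℛ F a).right i * k)) := by
          rw [hadR, Finset.sum_mul]
          refine Finset.sum_congr rfl fun i _ => ?_
          simp only [mul_assoc]
      _ = ∑ i ∈ (ℛ F a).index, ∑ j ∈ (ℛ F ((ℛ F a).right i)).index,
            τ ((ℛ F a).left i) * (adLl F k ((ℛ F ((ℛ F a).right i)).left j) *
              (c * (ℛ F ((ℛ F a).right i)).right j)) := by
          refine Finset.sum_congr rfl fun i _ => ?_
          rw [← key_L3 F k ((ℛ F a).right i) (ℛ F ((ℛ F a).right i)), Finset.mul_sum,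
            Finset.mul_sum]
          refine Finset.sum_congr rfl fun j _ => ?_
          have hq : adLl F k ((ℛ F ((ℛ F a).right i)).left j) ∈ K :=
            (hn _ k hk).1
          rw [← mul_assoc c, hcc _ hq, mul_assoc]
      _ = ∑ i ∈ (ℛ F a).index, ∑ j ∈ (ℛ F ((ℛ F a).left i)).index,
            τ ((ℛ F ((ℛ F a).left i)).left j) * (adLl F k ((ℛ F ((ℛ F a).left i)).right j) *
              (c * (ℛ F a).right i)) := coas.symm
      _ = ∑ i ∈ (ℛ F a).index, (k * τ ((ℛ F a).left i)) * (c * (ℛ F a).right i) := by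
          refine Finset.sum_congr rfl fun i _ => ?_
          rw [← key_L4 F k ((ℛ F a).left i) (ℛ F ((ℛ F a).left i)), Finset.sum_mul]
          exact Finset.sum_congr rfl fun j _ => (mul_assoc _ _ _).symm
      _ = k * adR (F := F) a c := by
          rw [hadR, Finset.mul_sum]
          refine Finset.sum_congr rfl fun i _ => ?_
          simp only [mul_assoc]


theorem normal_hopf_subalgebra_centralizer_normal {F : Type u} [Field F] {H : Type u} [Ring H] [HopfAlgebra F H]
    [FiniteDimensional F H] (K : Subalgebra F H) (hK : IsHopfSub K)
    (hC : IsHopfSub (Subalgebra.centralizer F (K : Set H)))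
    (hn : IsNormalHopfSub K) :
    IsNormalHopfSub (Subalgebra.centralizer F (K : Set H)) := main' F hn


end PaperHopf
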